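/- Let H be a complex Hilbert space, A a bounded self-adjoint operator on H, and V a bounded nonnegative operator on H satisfying the maximality condition that the closed linear span of {(A−λ)⁻¹ V x : x ∈ H, λ ∈ ℂ, Im λ ≠ 0} equals H. Then the dissipative operator L = A + iV is completely nonself-adjoint; equivalently, if K ⊆ H is a closed subspace with A K ⊆ K and V x = 0 for every x ∈ K (so that L restricted to K is self-adjoint), then K = {0}. -/

import Mathlib

open MeasureTheory Complex Filter Topology Set ComplexConjugate
open scoped ComplexOrder

noncomputable section

/-- The closed linear span of `{(A−λ)⁻¹ V x : x ∈ H, Im λ ≠ 0}` is all of `H`. -/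
def ResolventMaximal {H : Type*} [NormedAddCommGroup H] [InnerProductSpace ℂ H]
    [CompleteSpace H] (A V : H →L[ℂ] H) : Prop :=
  (Submodule.span ℂ {y : H | ∃ (x : H) (lam : ℂ), lam.im ≠ 0 ∧
      y = Ring.inverse (A - lam • (1 : H →L[ℂ] H)) (V x)}).topologicalClosure = ⊤

/-- If `D` and its adjoint preserve a closed subspace `K` and `E` is a two-sided inverse
of `D`, then `E` preserves `K` as well. -/
lemma inv_maps_to_aux {H : Type*} [NormedAddCommGroup H] [InnerProductSpace ℂ H]
    [CompleteSpace H] (K : Submodule ℂ H) (hK : IsClosed (K : Set H))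
    (D E : H →L[ℂ] H) (hDE : D * E = 1) (hED : E * D = 1)
    (hD : ∀ x ∈ K, D x ∈ K) (hD' : ∀ x ∈ K, ContinuousLinearMap.adjoint D x ∈ K) :
    ∀ x ∈ K, E x ∈ K := by
  haveI : CompleteSpace K := hK.completeSpace_coe
  intro x hx
  obtain ⟨y, hy, z, hz, hyz⟩ := K.exists_add_mem_mem_orthogonal (E x)
  have hDEx : D (E x) = x := by
    have := congrArg (fun T : H →L[ℂ] H => T x) hDE
    simpa using this
  have hDz : D z ∈ Kᗮ := by
    rw [Submodule.mem_orthogonal]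
    intro u hu
    rw [← ContinuousLinearMap.adjoint_inner_left]
    exact Submodule.inner_right_of_mem_orthogonal (hD' u hu) hz
  have hDzK : D z ∈ K := by
    have : D z = x - D y := by
      rw [← hDEx, hyz, map_add]; abel
    rw [this]
    exact K.sub_mem hx (hD y hy)
  have hDz0 : D z = 0 :=
    Submodule.disjoint_def.mp K.orthogonal_disjoint _ hDzK hDz
  have hz0 : z = 0 := by
    have := congrArg (fun T : H →L[ℂ] H => T z) hED
    simpa [hDz0] using this.symm
  rw [hyz, hz0, add_zero]
  exact hy

/-- Let `A` be a bounded self-adjoint operator and `V` a bounded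
nonnegative operator such that the closed linear span of `{(A−λ)⁻¹ V x : Im λ ≠ 0}` is all
of `H`.  Then the dissipative operator `L = A + iV` is completely nonself-adjoint: every
closed subspace `K` with `A K ⊆ K` and `V|_K = 0` (so that `L|_K` is self-adjoint) is
trivial. -/
theorem completely_nonselfadjoint_of_resolventMaximal
    {H : Type*} [NormedAddCommGroup H] [InnerProductSpace ℂ H] [CompleteSpace H]
    (A V : H →L[ℂ] H) (hA : IsSelfAdjoint A)
    (hV : ∀ x : H, 0 ≤ (inner ℂ (V x) x : ℂ))
    (hmax : ResolventMaximal A V) :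
    ∀ K : Submodule ℂ H, IsClosed (K : Set H) →
      (∀ x ∈ K, A x ∈ K) → (∀ x ∈ K, V x = 0) → K = ⊥ := by
  intro K hK hAK hVK
  -- V is self-adjoint
  have hVsa : IsSelfAdjoint V := by
    rw [ContinuousLinearMap.isSelfAdjoint_iff_isSymmetric]
    rw [LinearMap.isSymmetric_iff_inner_map_self_real]
    intro v
    have h := hV v
    rw [Complex.le_def] at h
    rw [Complex.conj_eq_iff_im]
    exact h.2.symm
  -- the spanning set is orthogonal to K
  have hle : (Submodule.span ℂ {y : H | ∃ (x : H) (lam : ℂ), lam.im ≠ 0 ∧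
      y = Ring.inverse (A - lam • (1 : H →L[ℂ] H)) (V x)}).topologicalClosure ≤ Kᗮ := by
    refine Submodule.topologicalClosure_minimal _ ?_ K.isClosed_orthogonal
    rw [Submodule.span_le]
    rintro y ⟨x, lam, hlam, rfl⟩
    by_cases hB : IsUnit (A - lam • (1 : H →L[ℂ] H))
    · set B := A - lam • (1 : H →L[ℂ] H) with hBdef
      set C := Ring.inverse B with hCdef
      have hBC : B * C = 1 := Ring.mul_inverse_cancel B hB
      have hCB : C * B = 1 := Ring.inverse_mul_cancel B hB
      -- adjoints
      have hBstar : star B = A - (starRingEnd ℂ lam) • (1 : H →L[ℂ] H) := by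
        rw [hBdef, star_sub, hA.star_eq, star_smul, star_one]
        rfl
      -- star C is a two-sided inverse of star B
      have h1 : star B * star C = 1 := by
        rw [← star_mul, hCB, star_one]
      have h2 : star C * star B = 1 := by
        rw [← star_mul, hBC, star_one]
      -- star B preserves K
      have hsBK : ∀ w ∈ K, star B w ∈ K := by
        intro w hw
        rw [hBstar]
        simpa using K.sub_mem (hAK w hw) (K.smul_mem (starRingEnd ℂ lam) hw)
      -- adjoint of star B = B preserves K
      have hsBadjK : ∀ w ∈ K, ContinuousLinearMap.adjoint (star B) w ∈ K := by
        intro w hw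
        have : ContinuousLinearMap.adjoint (star B) = B := by
          rw [← ContinuousLinearMap.star_eq_adjoint, star_star]
        rw [this, hBdef]
        simpa using K.sub_mem (hAK w hw) (K.smul_mem lam hw)
      have hCstarK : ∀ w ∈ K, star C w ∈ K :=
        inv_maps_to_aux K hK (star B) (star C) h1 h2 hsBK hsBadjK
      -- now show C (V x) ∈ Kᗮ
      rw [SetLike.mem_coe, Submodule.mem_orthogonal]
      intro u hu
      have hadj : (inner ℂ u (C (V x)) : ℂ) = inner ℂ (ContinuousLinearMap.adjoint C u) (V x) := by
        rw [← ContinuousLinearMap.star_eq_adjoint]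
        rw [← ContinuousLinearMap.adjoint_inner_right]
        rw [← ContinuousLinearMap.star_eq_adjoint, star_star]
      rw [hadj]
      have hCu : ContinuousLinearMap.adjoint C u ∈ K := by
        rw [← ContinuousLinearMap.star_eq_adjoint]
        exact hCstarK u hu
      -- ⟪w, V x⟫ = ⟪V w, x⟫ = 0 for w ∈ K
      have : (inner ℂ (ContinuousLinearMap.adjoint C u) (V x) : ℂ)
          = inner ℂ (V (ContinuousLinearMap.adjoint C u)) x := by
        conv_lhs => rw [← hVsa.adjoint_eq]
        rw [ContinuousLinearMap.adjoint_inner_right]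
      rw [this, hVK _ hCu, inner_zero_left]
    · rw [Ring.inverse_non_unit _ hB]
      simp
  rw [hmax] at hle
  have : Kᗮ = ⊤ := top_le_iff.mp hle
  have hKle : K ≤ ⊥ := by
    calc K ≤ Kᗮᗮ := Submodule.le_orthogonal_orthogonal K
    _ = (⊤ : Submodule ℂ H)ᗮ := by rw [this]
    _ = ⊥ := Submodule.top_orthogonal_eq_bot
  exact le_bot_iff.mp hKle
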